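/- In a closed process system over a finite type U with m transitions and k process instances, if there is an execution from a configuration c to a configuration c' in which every configuration has the same database component, then there is an execution from c to c' in which every configuration has that same database component and whose length is at most m * k. -/

import Mathlib

/-- A closed process system over a type `U` of facts. -/
structure ProcSys (U : Type) [DecidableEq U] where
  /-- places -/
  P : Type
  /-- transitions -/
  T : Type
  [finP : Fintype P]
  [finT : Fintype T]
  src : T → P
  tgt : T → P
  /-- number of process instances -/
  k : ℕ
  /-- enabling predicate -/
  En : Fin k → T → Finset U → Prop
  /-- writing function -/
  Wr : Fin k → T → Finset U → Finset U

attribute [instance] ProcSys.finP ProcSys.finT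

namespace ProcSys

variable {U : Type} [DecidableEq U]

/-- A configuration: positions of the instances together with a database. -/
abbrev Config (S : ProcSys U) : Type := (Fin S.k → S.P) × Finset U

/-- An allowed step by instance `i` via transition `t`. -/
def Step (S : ProcSys U) (i : Fin S.k) (t : S.T) (c c' : S.Config) : Prop :=
  c.1 i = S.src t ∧ S.En i t c.2 ∧
    c' = (Function.update c.1 i (S.tgt t), c.2 ∪ S.Wr i t c.2)

/-- `f` (restricted to `0, …, n`) is an execution of length `n` from configuration `c`. -/
def IsExec (S : ProcSys U) (c : S.Config) (n : ℕ) (f : ℕ → S.Config) : Prop :=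
  f 0 = c ∧ ∀ j < n, ∃ (i : Fin S.k) (t : S.T), S.Step i t (f j) (f (j + 1))

end ProcSys

namespace ProcSys

variable {U : Type} [DecidableEq U]

variable (S : ProcSys U)

def IsPath : S.P → S.P → List S.T → Prop
  | p, q, [] => p = q
  | p, q, t :: L => p = S.src t ∧ IsPath (S.tgt t) q L

lemma isPath_append {p q : S.P} {A B : List S.T} :
    S.IsPath p q (A ++ B) ↔ ∃ r, S.IsPath p r A ∧ S.IsPath r q B := by
  induction A generalizing p with
  | nil => simp [IsPath]
  | cons t A ih => simp [IsPath, ih, and_assoc]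

lemma shorten {G : S.T → Prop} {p q : S.P} {L : List S.T}
    (h : S.IsPath p q L) (hg : ∀ t ∈ L, G t) :
    ∃ L', L'.Nodup ∧ S.IsPath p q L' ∧ ∀ t ∈ L', G t := by
  induction L generalizing p with
  | nil => exact ⟨[], by simp, h, by simp⟩
  | cons t L ih =>
    obtain ⟨hpt, hL⟩ := h
    obtain ⟨L', hnd, hpath, hg'⟩ := ih hL (fun s hs => hg s (List.mem_cons_of_mem _ hs))
    by_cases hmem : t ∈ L'
    · obtain ⟨A, B, rfl⟩ := List.append_of_mem hmem
      rw [isPath_append] at hpath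
      obtain ⟨r, hA, hrst, hB⟩ := hpath
      have hndB : (t :: B).Nodup := hnd.sublist (List.sublist_append_right A (t :: B))
      exact ⟨t :: B, hndB, ⟨hpt, hB⟩,
        fun s hs => hg' s (by simpa using (List.sublist_append_right A (t :: B)).mem hs)⟩
    · exact ⟨t :: L', by simp [hnd, hmem], ⟨hpt, hpath⟩,
        fun s hs => by
          rcases List.mem_cons.mp hs with rfl | hs
          · exact hg s List.mem_cons_self
          · exact hg' s hs⟩

lemma extract {c : S.Config} {n : ℕ} {f : ℕ → S.Config}
    (hexec : S.IsExec c n f) (hdb : ∀ j ≤ n, (f j).2 = c.2) (i : Fin S.k) :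
    ∃ L, S.IsPath (c.1 i) ((f n).1 i) L ∧
      ∀ t ∈ L, S.En i t c.2 ∧ c.2 ∪ S.Wr i t c.2 = c.2 := by
  induction n with
  | zero =>
    refine ⟨[], ?_, by simp⟩
    show c.1 i = (f 0).1 i
    rw [hexec.1]
  | succ n ih =>
    have hexec' : S.IsExec c n f := ⟨hexec.1, fun j hj => hexec.2 j (by omega)⟩
    obtain ⟨L, hL, hgL⟩ := ih hexec' (fun j hj => hdb j (by omega))
    obtain ⟨i0, t0, hs, he, heq⟩ := hexec.2 n (Nat.lt_succ_self n)
    have hdn : (f n).2 = c.2 := hdb n (by omega)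
    have hdn1 : (f (n + 1)).2 = c.2 := hdb (n + 1) le_rfl
    have hgood : S.En i0 t0 c.2 ∧ c.2 ∪ S.Wr i0 t0 c.2 = c.2 := by
      constructor
      · rw [← hdn]; exact he
      · rw [← hdn]
        have : (f (n + 1)).2 = (f n).2 ∪ S.Wr i0 t0 (f n).2 := by rw [heq]
        rw [← this, hdn1, hdn]
    by_cases hi : i0 = i
    · subst hi
      refine ⟨L ++ [t0], ?_, ?_⟩
      · rw [isPath_append]
        refine ⟨(f n).1 i0, hL, ?_⟩
        refine ⟨?_, ?_⟩
        · exact hs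
        · show S.tgt t0 = (f (n + 1)).1 i0
          rw [heq]; simp
      · intro t ht
        rcases List.mem_append.mp ht with ht | ht
        · exact hgL t ht
        · simp at ht; subst ht; exact hgood
    · refine ⟨L, ?_, hgL⟩
      have hupd : (f (n + 1)).1 i = (f n).1 i := by
        rw [heq]; exact Function.update_of_ne (Ne.symm hi) _ _
      rw [hupd]; exact hL


lemma exec_comp {cc d : S.Config} {n m : ℕ} {f g : ℕ → S.Config} {D : Finset U}
    (hf : S.IsExec cc n f) (hfd : f n = d) (hg : S.IsExec d m g)
    (hfD : ∀ j ≤ n, (f j).2 = D) (hgD : ∀ j ≤ m, (g j).2 = D) :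
    ∃ h : ℕ → S.Config, S.IsExec cc (n + m) h ∧ h (n + m) = g m ∧
      ∀ j ≤ n + m, (h j).2 = D := by
  refine ⟨fun j => if j < n then f j else g (j - n), ?_, ?_, ?_⟩
  · constructor
    · by_cases h0 : 0 < n
      · simpa [h0] using hf.1
      · have h0' : n = 0 := by omega
        subst h0'
        show (if (0:ℕ) < 0 then f 0 else g 0) = cc
        rw [if_neg (lt_irrefl 0), hg.1, ← hfd, hf.1]
    · intro j hj
      by_cases h1 : j + 1 < n
      · have h2 : j < n := by omega
        simpa [h1, h2] using hf.2 j h2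
      · by_cases h2 : j < n
        · have hjn : j + 1 = n := by omega
          have := hf.2 j h2
          simpa [h2, if_neg (lt_irrefl n), hjn, hfd, hg.1] using this
        · have h3 : ¬ j + 1 < n := by omega
          have h4 : j + 1 - n = (j - n) + 1 := by omega
          have := hg.2 (j - n) (by omega)
          simpa [h2, h3, h4] using this
  · have : ¬ n + m < n := by omega
    simp [this]
  · intro j hj
    by_cases h2 : j < n
    · simpa [h2] using hfD j (by omega)
    · simpa [h2] using hgD (j - n) (by omega)

lemma build_one (D : Finset U) (i : Fin S.k) (q : S.P) :
    ∀ (L : List S.T) (pos : Fin S.k → S.P),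
    S.IsPath (pos i) q L →
    (∀ t ∈ L, S.En i t D ∧ D ∪ S.Wr i t D = D) →
    ∃ f, S.IsExec (pos, D) L.length f ∧ f L.length = (Function.update pos i q, D) ∧
      ∀ j ≤ L.length, (f j).2 = D := by
  intro L
  induction L with
  | nil =>
    intro pos h _
    refine ⟨fun _ => (pos, D), ⟨rfl, by simp⟩, ?_, fun _ _ => rfl⟩
    have : q = pos i := h.symm
    simp [this, Function.update_eq_self]
  | cons t L ih =>
    intro pos h hg
    obtain ⟨hs, hL⟩ := h
    set pos' := Function.update pos i (S.tgt t) with hpos'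
    have hL' : S.IsPath (pos' i) q L := by
      rw [hpos']; simpa using hL
    obtain ⟨g, hg1, hg2, hg3⟩ := ih pos' hL'
      (fun s hs => hg s (List.mem_cons_of_mem _ hs))
    have hgood := hg t List.mem_cons_self
    have hstep : S.Step i t (pos, D) (pos', D) := by
      refine ⟨hs, hgood.1, ?_⟩
      rw [hpos']
      exact Prod.ext rfl (by simpa using hgood.2.symm)
    have hone : S.IsExec (pos, D) 1 (fun j => if j = 0 then (pos, D) else (pos', D)) := by
      refine ⟨by simp, ?_⟩
      intro j hj
      have : j = 0 := by omega
      subst this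
      exact ⟨i, t, by simpa using hstep⟩
    obtain ⟨h, hh1, hh2, hh3⟩ := S.exec_comp hone (by simp) hg1
      (by intro j hj; interval_cases j <;> simp) hg3
    refine ⟨h, ?_, ?_, ?_⟩
    · simpa [Nat.add_comm] using hh1
    · rw [show (t :: L).length = 1 + L.length by simp [Nat.add_comm], hh2, hg2, hpos']
      rw [Function.update_idem]
    · intro j hj
      exact hh3 j (by simpa [Nat.add_comm] using hj)

lemma build_multi (D : Finset U) (target : Fin S.k → S.P) :
    ∀ r, r ≤ S.k → ∀ pos : Fin S.k → S.P,
    (∀ i : Fin S.k, (i : ℕ) < r → ∃ L : List S.T, L.Nodup ∧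
        S.IsPath (pos i) (target i) L ∧
        ∀ t ∈ L, S.En i t D ∧ D ∪ S.Wr i t D = D) →
    (∀ i : Fin S.k, r ≤ (i : ℕ) → pos i = target i) →
    ∃ n f, n ≤ Fintype.card S.T * r ∧ S.IsExec (pos, D) n f ∧ f n = (target, D) ∧
      ∀ j ≤ n, (f j).2 = D := by
  intro r
  induction r with
  | zero =>
    intro _ pos _ h2
    have : pos = target := funext fun i => h2 i (Nat.zero_le _)
    exact ⟨0, fun _ => (pos, D), by simp, ⟨rfl, by omega⟩, by rw [this], fun _ _ => rfl⟩
  | succ r ih =>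
    intro hr pos h1 h2
    set i0 : Fin S.k := ⟨r, by omega⟩ with hi0
    obtain ⟨L, hnd, hpath, hg⟩ := h1 i0 (by simp [hi0])
    obtain ⟨f1, he1, hf1, hd1⟩ := S.build_one D i0 (target i0) L pos hpath hg
    have hlen : L.length ≤ Fintype.card S.T := hnd.length_le_card
    set pos' := Function.update pos i0 (target i0) with hpos'
    obtain ⟨n2, f2, hn2, he2, hf2, hd2⟩ := ih (by omega) pos'
      (fun i hi => by
        have hne : i ≠ i0 := by
          intro h
          have : (i : ℕ) = r := by rw [h, hi0]
          omega
        rw [hpos', Function.update_of_ne hne]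
        exact h1 i (by omega))
      (fun i hi => by
        by_cases hii : i = i0
        · rw [hii, hpos', Function.update_self]
        · rw [hpos', Function.update_of_ne hii]
          have : (i : ℕ) ≠ r := fun h => hii (Fin.ext (by rw [h, hi0]))
          exact h2 i (by omega))
    obtain ⟨h, hh1, hh2, hh3⟩ := S.exec_comp he1 hf1 he2 hd1 hd2
    refine ⟨L.length + n2, h, ?_, hh1, by rw [hh2, hf2], hh3⟩
    calc L.length + n2 ≤ Fintype.card S.T + Fintype.card S.T * r := by omega
    _ = Fintype.card S.T * (r + 1) := by ring


theorem exec_constant_db_shorten' (c c' : S.Config) (n : ℕ) (f : ℕ → S.Config)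
    (hexec : S.IsExec c n f) (hlast : f n = c')
    (hdb : ∀ j ≤ n, (f j).2 = c.2) :
    ∃ (n' : ℕ) (f' : ℕ → S.Config),
      n' ≤ Fintype.card S.T * S.k ∧
      S.IsExec c n' f' ∧ f' n' = c' ∧ ∀ j ≤ n', (f' j).2 = c.2 := by
  have hc2 : c'.2 = c.2 := by rw [← hlast]; exact hdb n le_rfl
  have hpaths : ∀ i : Fin S.k, (i : ℕ) < S.k → ∃ L : List S.T, L.Nodup ∧
      S.IsPath (c.1 i) (c'.1 i) L ∧
      ∀ t ∈ L, S.En i t c.2 ∧ c.2 ∪ S.Wr i t c.2 = c.2 := by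
    intro i _
    obtain ⟨L, hL, hg⟩ := S.extract hexec hdb i
    rw [hlast] at hL
    exact S.shorten hL hg
  obtain ⟨n', f', hn', he', hf', hd'⟩ := S.build_multi c.2 c'.1 S.k le_rfl c.1 hpaths
    (fun i hi => absurd i.2 (by omega))
  refine ⟨n', f', hn', he', ?_, hd'⟩
  rw [hf']
  exact Prod.ext rfl hc2.symm

end ProcSys

/-- an execution segment in which the database never changes can be
shortened to length at most `m * k` while keeping the same endpoints and still
keeping the database constant. -/
theorem exec_constant_db_shorten (U : Type) [Fintype U] [DecidableEq U]
    (S : ProcSys U) (c c' : S.Config) (n : ℕ) (f : ℕ → S.Config)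
    (hexec : S.IsExec c n f) (hlast : f n = c')
    (hdb : ∀ j ≤ n, (f j).2 = c.2) :
    ∃ (n' : ℕ) (f' : ℕ → S.Config),
      n' ≤ Fintype.card S.T * S.k ∧
      S.IsExec c n' f' ∧ f' n' = c' ∧ ∀ j ≤ n', (f' j).2 = c.2 := by
  exact S.exec_constant_db_shorten' c c' n f hexec hlast hdb
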